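/- In the setting of the previous cutoff function: if x is a point of the configuration ξ with x ∈ A_r := U_{2^r} \ U_{2^{r-1}} and y ∈ A_{r-1} ∪ A_r ∪ A_{r+1}, then |d_a(ξ^{x,y}) - d_a(ξ)| ≤ 1/a_{r-1} + 1/a_r + 1/a_{r+1}, where ξ^{x,y} = ξ - δ_x + δ_y is the configuration with the particle at x moved to y. -/

import Mathlib

open scoped BigOperators

/-- The cutoff functional `d_a` of a configuration given by the ordered list of points `x`:
`d_a(ξ) = ∑_{r≥1} ∑_{j ∈ J_{r,ξ}} ((2^r - |x_j|) ∧ 2^{r-1}) / (2^{r-1} a_r)` with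
`J_{r,ξ} = {j : j > a_r, x_j ∈ U_{2^r}}` (here `x j` is the (j+1)-st point). -/
noncomputable def dFun (d : ℕ) (a : ℕ → ℝ) (x : ℕ → EuclideanSpace ℝ (Fin d)) : ℝ :=
  ∑' r : ℕ, ∑' j : {j : ℕ | a (r + 1) < ((j : ℝ) + 1) ∧ ‖x j‖ ≤ (2 : ℝ) ^ (r + 1)},
    min ((2 : ℝ) ^ (r + 1) - ‖x (j : ℕ)‖) ((2 : ℝ) ^ r) / ((2 : ℝ) ^ r * a (r + 1))

noncomputable def Gfun (s : ℕ) (A t : ℝ) : ℝ :=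
  max (min ((2:ℝ)^(s+1) - t) ((2:ℝ)^s)) 0 / ((2:ℝ)^s * A)

lemma Gfun_nonneg (s : ℕ) (A t : ℝ) (hA : 0 < A) : 0 ≤ Gfun s A t :=
  div_nonneg (le_max_right _ _) (by positivity)

lemma Gfun_le (s : ℕ) (A t : ℝ) (hA : 0 < A) : Gfun s A t ≤ 1 / A := by
  have h2 : (0:ℝ) < (2:ℝ)^s := by positivity
  have hnum : max (min ((2:ℝ)^(s+1) - t) ((2:ℝ)^s)) 0 ≤ (2:ℝ)^s :=
    max_le (min_le_right _ _) h2.le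
  calc Gfun s A t ≤ (2:ℝ)^s / ((2:ℝ)^s * A) := by
        unfold Gfun; gcongr
    _ = 1 / A := by
        rw [div_mul_eq_div_div, div_self h2.ne']

lemma Gfun_anti (s : ℕ) (A t₁ t₂ : ℝ) (hA : 0 < A) (h : t₁ ≤ t₂) :
    Gfun s A t₂ ≤ Gfun s A t₁ := by
  unfold Gfun
  have : min ((2:ℝ)^(s+1) - t₂) ((2:ℝ)^s) ≤ min ((2:ℝ)^(s+1) - t₁) ((2:ℝ)^s) :=
    min_le_min (by linarith) le_rfl
  gcongr

lemma Gfun_of_gt (s : ℕ) (A t : ℝ) (h : (2:ℝ)^(s+1) < t) : Gfun s A t = 0 := by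
  unfold Gfun
  rw [max_eq_right, zero_div]
  exact le_trans (min_le_left _ _) (by linarith)

lemma Gfun_of_le (s : ℕ) (A t : ℝ) (h : t ≤ (2:ℝ)^(s+1)) :
    Gfun s A t = min ((2:ℝ)^(s+1) - t) ((2:ℝ)^s) / ((2:ℝ)^s * A) := by
  unfold Gfun
  rw [max_eq_left]
  exact le_min (by linarith) (by positivity)

lemma Gfun_of_le_half (s : ℕ) (A t : ℝ) (hA : 0 < A) (h : t ≤ (2:ℝ)^s) :
    Gfun s A t = 1 / A := by
  have h2 : (0:ℝ) < (2:ℝ)^s := by positivity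
  have hs : (2:ℝ)^(s+1) = (2:ℝ)^s * 2 := pow_succ 2 s
  rw [Gfun_of_le s A t (by nlinarith)]
  rw [min_eq_right (by nlinarith), div_mul_eq_div_div, div_self h2.ne']

lemma exists_ge_of_card (s : Finset ℕ) (j : ℕ) (h : j + 1 ≤ s.card) : ∃ p ∈ s, j ≤ p := by
  by_contra hc
  push_neg at hc
  have hsub : s ⊆ Finset.range j := fun p hp => Finset.mem_range.mpr (hc p hp)
  have := Finset.card_le_card hsub
  rw [Finset.card_range] at this
  omega

lemma sandwich (g g' q : ℕ → ℝ) (τ : ℕ ≃ ℕ) (i₀ : ℕ)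
    (hg : ∀ i j, i ≤ j → g j ≤ g i) (hg' : ∀ i j, i ≤ j → g' j ≤ g' i)
    (hq : ∀ i, i ≠ i₀ → q i = g i) (hq0 : q i₀ ≤ g i₀)
    (hgg : ∀ j, g' j = q (τ j)) :
    (∀ j, g' j ≤ g j) ∧ (∀ j, g (j + 1) ≤ g' j) := by
  have hqle : ∀ i, q i ≤ g i := by
    intro i; by_cases h : i = i₀
    · subst h; exact hq0
    · exact (hq i h).le
  constructor
  · intro j
    have hcard : j + 1 ≤ ((Finset.range (j+1)).image τ).card := by
      rw [Finset.card_image_of_injective _ τ.injective, Finset.card_range]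
    obtain ⟨i, hi, hij⟩ := exists_ge_of_card _ j hcard
    obtain ⟨p, hp, rfl⟩ := Finset.mem_image.mp hi
    have hpj : p ≤ j := Nat.lt_succ_iff.mp (Finset.mem_range.mp hp)
    calc g' j ≤ g' p := hg' p j hpj
      _ = q (τ p) := hgg p
      _ ≤ g (τ p) := hqle _
      _ ≤ g j := hg j (τ p) hij
  · intro j
    have hcard : j + 1 ≤ (((Finset.range (j+2)).erase i₀).image τ.symm).card := by
      rw [Finset.card_image_of_injective _ τ.symm.injective]
      have h1 : (Finset.range (j+2)).card - 1 ≤ ((Finset.range (j+2)).erase i₀).card :=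
        Finset.pred_card_le_card_erase
      rw [Finset.card_range] at h1
      omega
    obtain ⟨p, hp, hjp⟩ := exists_ge_of_card _ j hcard
    obtain ⟨i, hi, rfl⟩ := Finset.mem_image.mp hp
    have hii : i ≠ i₀ := Finset.ne_of_mem_erase hi
    have hile : i ≤ j + 1 := Nat.lt_succ_iff.mp
      (Finset.mem_range.mp (Finset.mem_of_mem_erase hi))
    calc g (j+1) ≤ g i := hg i (j+1) hile
      _ = q i := (hq i hii).symm
      _ = q (τ (τ.symm i)) := by rw [Equiv.apply_symm_apply]
      _ = g' (τ.symm i) := (hgg _).symm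
      _ ≤ g' j := hg' j (τ.symm i) hjp

lemma tail_diff (g g' : ℕ → ℝ) (k M : ℕ) (B : ℝ) (hgnn : ∀ j, 0 ≤ g j)
    (hub : ∀ j, g' j ≤ g j) (hlb : ∀ j, g (j+1) ≤ g' j) (hgk : g k ≤ B) (hB : 0 ≤ B) :
    |∑ j ∈ Finset.Ico k M, g' j - ∑ j ∈ Finset.Ico k M, g j| ≤ B := by
  have h1 : ∑ j ∈ Finset.Ico k M, g (j+1) ≤ ∑ j ∈ Finset.Ico k M, g' j :=
    Finset.sum_le_sum fun j _ => hlb j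
  have h2 : ∑ j ∈ Finset.Ico k M, g (j+1) = ∑ j ∈ Finset.Ico (k+1) (M+1), g j := by
    rw [Finset.sum_Ico_eq_sum_range, Finset.sum_Ico_eq_sum_range]
    rw [show M + 1 - (k + 1) = M - k by omega]
    exact Finset.sum_congr rfl fun i _ => by rw [show k + i + 1 = k + 1 + i by omega]
  have h3 : ∑ j ∈ Finset.Ico (k+1) M, g j ≤ ∑ j ∈ Finset.Ico (k+1) (M+1), g j := by
    apply Finset.sum_le_sum_of_subset_of_nonneg
    · exact Finset.Ico_subset_Ico le_rfl (by omega)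
    · exact fun j _ _ => hgnn j
  have h4 : ∑ j ∈ Finset.Ico k M, g j - g k ≤ ∑ j ∈ Finset.Ico (k+1) M, g j := by
    rcases lt_or_ge k M with h | h
    · rw [Finset.sum_eq_sum_Ico_succ_bot h]; linarith
    · rw [Finset.Ico_eq_empty (by omega), Finset.Ico_eq_empty (by omega)]
      simp [hgnn k]
  have h5 : ∑ j ∈ Finset.Ico k M, g' j ≤ ∑ j ∈ Finset.Ico k M, g j :=
    Finset.sum_le_sum fun j _ => hub j
  rw [abs_le]
  constructor <;> linarith

lemma inner_eq (s : ℕ) (a1 : ℝ) (ha1 : 0 < a1) (w : ℕ → ℝ) (M : ℕ)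
    (hM : ∀ j, M ≤ j → (2:ℝ)^(s+1) < w j) :
    (∑' j : {j : ℕ | a1 < ((j:ℝ)+1) ∧ w j ≤ (2:ℝ)^(s+1)},
      min ((2:ℝ)^(s+1) - w (j:ℕ)) ((2:ℝ)^s) / ((2:ℝ)^s * a1))
    = ∑ j ∈ Finset.Ico (Nat.floor a1) M, Gfun s a1 (w j) := by
  set S : Set ℕ := {j : ℕ | a1 < ((j:ℝ)+1) ∧ w j ≤ (2:ℝ)^(s+1)} with hS
  set f : ℕ → ℝ := fun j => min ((2:ℝ)^(s+1) - w j) ((2:ℝ)^s) / ((2:ℝ)^s * a1) with hf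
  have hmem : ∀ j : ℕ, j ∈ S ↔ (Nat.floor a1 ≤ j ∧ w j ≤ (2:ℝ)^(s+1)) := by
    intro j
    rw [hS]
    simp only [Set.mem_setOf_eq]
    constructor
    · rintro ⟨h1, h2⟩
      refine ⟨?_, h2⟩
      have hfl : (Nat.floor a1 : ℝ) ≤ a1 := Nat.floor_le ha1.le
      have : (Nat.floor a1 : ℝ) < (j:ℝ) + 1 := lt_of_le_of_lt hfl h1
      exact_mod_cast Nat.lt_succ_iff.mp (by exact_mod_cast this)
    · rintro ⟨h1, h2⟩
      refine ⟨?_, h2⟩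
      have : a1 < (Nat.floor a1 : ℝ) + 1 := Nat.lt_floor_add_one a1
      have hj : (Nat.floor a1 : ℝ) ≤ (j:ℝ) := by exact_mod_cast h1
      linarith
  have hind : ∀ j : ℕ, S.indicator f j =
      (↑(Finset.Ico (Nat.floor a1) M) : Set ℕ).indicator (fun j => Gfun s a1 (w j)) j := by
    intro j
    by_cases hj : j ∈ S
    · obtain ⟨h1, h2⟩ := (hmem j).1 hj
      have hjM : j < M := by
        by_contra h
        push_neg at h
        exact absurd h2 (not_le.mpr (hM j h))
      rw [Set.indicator_of_mem hj, Set.indicator_of_mem (by simp [Finset.mem_Ico]; omega)]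
      rw [Gfun_of_le s a1 (w j) h2]
    · rw [Set.indicator_of_notMem hj]
      by_cases hj2 : j ∈ (↑(Finset.Ico (Nat.floor a1) M) : Set ℕ)
      · rw [Set.indicator_of_mem hj2]
        simp only [Finset.coe_Ico, Set.mem_Ico] at hj2
        have hw : (2:ℝ)^(s+1) < w j := by
          by_contra h
          push_neg at h
          exact hj ((hmem j).2 ⟨hj2.1, h⟩)
        rw [Gfun_of_gt s a1 (w j) hw]
      · rw [Set.indicator_of_notMem hj2]
  rw [tsum_subtype S f, tsum_congr hind]
  rw [tsum_eq_sum (s := Finset.Ico (Nat.floor a1) M)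
    (fun b hb => Set.indicator_of_notMem (by simpa using hb) _)]
  exact Finset.sum_congr rfl fun j hj => Set.indicator_of_mem (by simpa using hj) _

lemma shell_core (s : ℕ) (A : ℝ) (hA : 0 < A) (w w' : ℕ → ℝ)
    (hmw : Monotone w) (hmw' : Monotone w') (j₀ : ℕ) (v : ℝ) (σ : ℕ ≃ ℕ)
    (hw' : ∀ j, w' j = Function.update w j₀ v (σ j)) (M : ℕ)
    (hM : ∀ j, M ≤ j → (2:ℝ)^(s+1) < w j ∧ (2:ℝ)^(s+1) < w' j) :
    |(∑' j : {j : ℕ | A < ((j:ℝ)+1) ∧ w' j ≤ (2:ℝ)^(s+1)},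
        min ((2:ℝ)^(s+1) - w' (j:ℕ)) ((2:ℝ)^s) / ((2:ℝ)^s * A))
      - (∑' j : {j : ℕ | A < ((j:ℝ)+1) ∧ w j ≤ (2:ℝ)^(s+1)},
        min ((2:ℝ)^(s+1) - w (j:ℕ)) ((2:ℝ)^s) / ((2:ℝ)^s * A))| ≤ 1/A
    ∧ (Gfun s A v = Gfun s A (w j₀) →
      (∑' j : {j : ℕ | A < ((j:ℝ)+1) ∧ w' j ≤ (2:ℝ)^(s+1)},
        min ((2:ℝ)^(s+1) - w' (j:ℕ)) ((2:ℝ)^s) / ((2:ℝ)^s * A))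
      = (∑' j : {j : ℕ | A < ((j:ℝ)+1) ∧ w j ≤ (2:ℝ)^(s+1)},
        min ((2:ℝ)^(s+1) - w (j:ℕ)) ((2:ℝ)^s) / ((2:ℝ)^s * A))) := by
  set g : ℕ → ℝ := fun j => Gfun s A (w j) with hg
  set g' : ℕ → ℝ := fun j => Gfun s A (w' j) with hg'
  set q : ℕ → ℝ := fun i => Gfun s A (Function.update w j₀ v i) with hqdef
  have hganti : ∀ i j, i ≤ j → g j ≤ g i := fun i j h => Gfun_anti s A _ _ hA (hmw h)
  have hg'anti : ∀ i j, i ≤ j → g' j ≤ g' i := fun i j h => Gfun_anti s A _ _ hA (hmw' h)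
  have hq : ∀ i, i ≠ j₀ → q i = g i := fun i h => by
    simp [hqdef, hg, Function.update_of_ne h]
  have hq0 : q j₀ = Gfun s A v := by simp [hqdef]
  have hgg : ∀ j, g' j = q (σ j) := fun j => by simp [hg', hqdef, hw' j]
  have e1 := inner_eq s A hA w M (fun j hj => (hM j hj).1)
  have e2 := inner_eq s A hA w' M (fun j hj => (hM j hj).2)
  set q2 : ℕ → ℝ := fun i => if i = σ.symm j₀ then g j₀ else g' i with hq2def
  have hq2 : ∀ i, i ≠ σ.symm j₀ → q2 i = g' i := fun i h => if_neg h
  have hg'v : g' (σ.symm j₀) = Gfun s A v := by rw [hgg, Equiv.apply_symm_apply, hq0]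
  have hgq2 : ∀ j, g j = q2 (σ.symm j) := by
    intro j
    by_cases h : j = j₀
    · subst h; simp [hq2def]
    · have hne : σ.symm j ≠ σ.symm j₀ := fun hc => h (σ.symm.injective hc)
      rw [show q2 (σ.symm j) = g' (σ.symm j) from if_neg hne, hgg,
        Equiv.apply_symm_apply, hq j h]
  constructor
  · rw [e1, e2]
    rcases le_total (Gfun s A v) (g j₀) with hc | hc
    · obtain ⟨hub, hlb⟩ := sandwich g g' q σ j₀ hganti hg'anti hq (by rw [hq0]; exact hc) hgg
      exact tail_diff g g' _ M (1/A) (fun j => Gfun_nonneg _ _ _ hA) hub hlb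
        (Gfun_le _ _ _ hA) (by positivity)
    · obtain ⟨hub, hlb⟩ := sandwich g' g q2 σ.symm (σ.symm j₀) hg'anti hganti hq2
        (by rw [show q2 (σ.symm j₀) = g j₀ from if_pos rfl, hg'v]; exact hc) hgq2
      rw [abs_sub_comm]
      exact tail_diff g' g _ M (1/A) (fun j => Gfun_nonneg _ _ _ hA) hub hlb
        (Gfun_le _ _ _ hA) (by positivity)
  · intro hv
    have h1 := sandwich g g' q σ j₀ hganti hg'anti hq (by rw [hq0, hv]) hgg
    have h2 := sandwich g' g q2 σ.symm (σ.symm j₀) hg'anti hganti hq2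
      (by rw [show q2 (σ.symm j₀) = g j₀ from if_pos rfl, hg'v, hv]) hgq2
    rw [e1, e2]
    exact Finset.sum_congr rfl fun j _ => le_antisymm (h1.1 j) (h2.1 j)

theorem stmt_19 (d : ℕ) (hd : 1 ≤ d) (κ : ℝ) (hκ : 0 ≤ κ) (n : ℕ) (hn : 1 ≤ n)
    (a : ℕ → ℝ) (ha : ∀ r : ℕ, a r = (n : ℝ) * 2 ^ (((d : ℝ) + κ) * r))
    -- `x` lists the points of ξ, `x'` lists the points of ξ^{x_{j₀}, y} = ξ - δ_{x_{j₀}} + δ_y,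
    -- both with nondecreasing norms, and ξ is locally finite
    (x x' : ℕ → EuclideanSpace ℝ (Fin d))
    (hordx : ∀ j : ℕ, ‖x j‖ ≤ ‖x (j + 1)‖) (hordx' : ∀ j : ℕ, ‖x' j‖ ≤ ‖x' (j + 1)‖)
    (hlocx : ∀ R : ℝ, {j : ℕ | ‖x j‖ ≤ R}.Finite)
    (j₀ r : ℕ) (hr : 1 ≤ r)
    -- x_{j₀} ∈ A_r = U_{2^r} \ U_{2^{r-1}} (with A_1 = U_2)
    (hxj : ‖x j₀‖ ≤ (2 : ℝ) ^ r ∧ (2 ≤ r → (2 : ℝ) ^ (r - 1) < ‖x j₀‖))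
    -- y ∈ A_{r-1} ∪ A_r ∪ A_{r+1}
    (y : EuclideanSpace ℝ (Fin d))
    (hy : ‖y‖ ≤ (2 : ℝ) ^ (r + 1) ∧ (2 ≤ r → (2 : ℝ) ^ (r - 2) < ‖y‖))
    -- x' is a reordering of x with the particle at x_{j₀} moved to y
    (σ : ℕ ≃ ℕ) (hσ : ∀ j : ℕ, x' j = Function.update x j₀ y (σ j)) :
    |dFun d a x' - dFun d a x| ≤ 1 / a (r - 1) + 1 / a r + 1 / a (r + 1) := by
  have ha_pos : ∀ m : ℕ, 0 < a m := by
    intro m; rw [ha m]; positivity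
  have hRHS0 : (0:ℝ) ≤ 1 / a (r-1) + 1 / a r + 1 / a (r+1) := by
    have h1 := ha_pos (r-1); have h2 := ha_pos r; have h3 := ha_pos (r+1); positivity
  have hupd : ∀ i : ℕ, ‖Function.update x j₀ y i‖
      = Function.update (fun i => ‖x i‖) j₀ ‖y‖ i := by
    intro i; by_cases h : i = j₀
    · subst h; simp
    · simp [Function.update_of_ne h]
  have hlocx' : ∀ R : ℝ, {j : ℕ | ‖x' j‖ ≤ R}.Finite := by
    intro R
    have h1 : {i : ℕ | ‖Function.update x j₀ y i‖ ≤ R}.Finite := by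
      apply Set.Finite.subset ((hlocx R).union (Set.finite_singleton j₀))
      intro i hi
      by_cases h : i = j₀
      · exact Or.inr h
      · left; simpa [Function.update_of_ne h] using hi
    have h2 : {j : ℕ | ‖x' j‖ ≤ R} = σ ⁻¹' {i | ‖Function.update x j₀ y i‖ ≤ R} := by
      ext j; simp [hσ]
    rw [h2]
    exact Set.Finite.preimage σ.injective.injOn h1
  have hmx : Monotone fun j => ‖x j‖ := monotone_nat_of_le_succ hordx
  have hmx' : Monotone fun j => ‖x' j‖ := monotone_nat_of_le_succ hordx'
  set φ : ℕ → ℝ := fun s =>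
    ∑' j : {j : ℕ | a (s + 1) < ((j : ℝ) + 1) ∧ ‖x j‖ ≤ (2 : ℝ) ^ (s + 1)},
      min ((2 : ℝ) ^ (s + 1) - ‖x (j : ℕ)‖) ((2 : ℝ) ^ s) / ((2 : ℝ) ^ s * a (s + 1)) with hφdef
  set φ' : ℕ → ℝ := fun s =>
    ∑' j : {j : ℕ | a (s + 1) < ((j : ℝ) + 1) ∧ ‖x' j‖ ≤ (2 : ℝ) ^ (s + 1)},
      min ((2 : ℝ) ^ (s + 1) - ‖x' (j : ℕ)‖) ((2 : ℝ) ^ s) / ((2 : ℝ) ^ s * a (s + 1)) with hφ'def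
  have hdx : dFun d a x = ∑' s, φ s := rfl
  have hdx' : dFun d a x' = ∑' s, φ' s := rfl
  have key : ∀ s : ℕ, |φ' s - φ s| ≤ 1 / a (s+1)
      ∧ ((s + 3 ≤ r ∨ r + 1 ≤ s) → φ' s = φ s) := by
    intro s
    obtain ⟨M, hM⟩ : ∃ M : ℕ, ∀ j, M ≤ j → (2:ℝ)^(s+1) < ‖x j‖ ∧ (2:ℝ)^(s+1) < ‖x' j‖ := by
      obtain ⟨m, hm⟩ := ((hlocx ((2:ℝ)^(s+1))).union (hlocx' ((2:ℝ)^(s+1)))).bddAbove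
      refine ⟨m+1, fun j hj => ⟨?_, ?_⟩⟩ <;> by_contra h <;> push_neg at h
      · have : j ≤ m := hm (Set.mem_union_left _ h)
        omega
      · have : j ≤ m := hm (Set.mem_union_right _ h)
        omega
    have hw' : ∀ j, ‖x' j‖ = Function.update (fun i => ‖x i‖) j₀ ‖y‖ (σ j) := fun j => by
      rw [hσ j, hupd]
    have hsc := shell_core s (a (s+1)) (ha_pos _) (fun j => ‖x j‖) (fun j => ‖x' j‖)
      hmx hmx' j₀ ‖y‖ σ hw' M hM
    refine ⟨hsc.1, fun hcase => hsc.2 ?_⟩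
    rcases hcase with h | h
    · have hr2 : 2 ≤ r := by omega
      have hx0 : (2:ℝ)^(s+1) < ‖x j₀‖ :=
        lt_of_le_of_lt (pow_le_pow_right₀ (by norm_num) (by omega : s+1 ≤ r-1)) (hxj.2 hr2)
      have hy0 : (2:ℝ)^(s+1) < ‖y‖ :=
        lt_of_le_of_lt (pow_le_pow_right₀ (by norm_num) (by omega : s+1 ≤ r-2)) (hy.2 hr2)
      rw [Gfun_of_gt _ _ _ hy0, Gfun_of_gt _ _ _ hx0]
    · have hx0 : ‖x j₀‖ ≤ (2:ℝ)^s :=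
        le_trans hxj.1 (pow_le_pow_right₀ (by norm_num) (by omega : r ≤ s))
      have hy0 : ‖y‖ ≤ (2:ℝ)^s :=
        le_trans hy.1 (pow_le_pow_right₀ (by norm_num) (by omega : r+1 ≤ s))
      rw [Gfun_of_le_half _ _ _ (ha_pos _) hy0, Gfun_of_le_half _ _ _ (ha_pos _) hx0]
  set ψ : ℕ → ℝ := fun s => φ' s - φ s with hψdef
  have hψ0 : ∀ s ∉ ({r-2, r-1, r} : Finset ℕ), ψ s = 0 := by
    intro s hs
    simp only [Finset.mem_insert, Finset.mem_singleton] at hs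
    push_neg at hs
    have he := (key s).2 (by omega)
    simp [hψdef, he]
  have hψb : ∀ s, |ψ s| ≤ 1 / a (s+1) := fun s => (key s).1
  have hψsum : Summable ψ := summable_of_ne_finset_zero hψ0
  have hφ'eq : φ' = fun s => φ s + ψ s := by funext s; simp [hψdef]
  have hfin : ∑ s ∈ ({r-2,r-1,r} : Finset ℕ), |ψ s| ≤ 1/a (r-1) + 1/a r + 1/a (r+1) := by
    rcases Nat.lt_or_ge r 2 with h2 | h2
    · have hr1 : r = 1 := by omega
      subst hr1
      have hset : ({1-2,1-1,1} : Finset ℕ) = {0,1} := by decide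
      rw [hset, Finset.sum_insert (by decide), Finset.sum_singleton]
      have b1 := hψb 0
      have b2 := hψb 1
      have h0 : (0:ℝ) < 1 / a (1-2) := by
        have := ha_pos (1-2); positivity
      norm_num at b1 b2 h0 ⊢
      have h0i : (0:ℝ) ≤ (a 0)⁻¹ := by positivity
      linarith
    · rw [show ({r-2,r-1,r} : Finset ℕ) = insert (r-2) (insert (r-1) {r}) from rfl,
        Finset.sum_insert (by simp; omega), Finset.sum_insert (by simp; omega),
        Finset.sum_singleton]
      have b1 := hψb (r-2)
      have b2 := hψb (r-1)
      have b3 := hψb r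
      rw [show r - 2 + 1 = r - 1 by omega] at b1
      rw [show r - 1 + 1 = r by omega] at b2
      linarith
  by_cases hS : Summable φ
  · have ht : ∑' s, φ' s = (∑' s, φ s) + ∑' s, ψ s := by
      rw [hφ'eq]; exact Summable.tsum_add hS hψsum
    rw [hdx, hdx', ht]
    have hcanc : (∑' s, φ s) + (∑' s, ψ s) - ∑' s, φ s = ∑' s, ψ s := by ring
    rw [hcanc, tsum_eq_sum hψ0]
    exact le_trans (Finset.abs_sum_le_sum_abs _ _) hfin
  · have hS' : ¬ Summable φ' := by
      intro h
      apply hS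
      have hφeq : φ = fun s => φ' s - ψ s := by funext s; simp [hψdef]
      rw [hφeq]; exact h.sub hψsum
    rw [hdx, hdx', tsum_eq_zero_of_not_summable hS', tsum_eq_zero_of_not_summable hS]
    simpa using hRHS0
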